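/- For the standard normal distribution, both truncated variances are bounded by the untruncated variance: for every real $\zeta$, $1 - \frac{\zeta\phi(\zeta)}{\Phi(\zeta)} - \left(\frac{\phi(\zeta)}{\Phi(\zeta)}\right)^2 \le 1$ and $1 + \frac{\zeta\phi(\zeta)}{1-\Phi(\zeta)} - \left(\frac{\phi(\zeta)}{1-\Phi(\zeta)}\right)^2 \le 1$; equivalently, $\mathrm{Var}(X \mid X \le v) \le \sigma^2$ and $\mathrm{Var}(X \mid X \ge v) \le \sigma^2$ for $X \sim \mathcal{N}(\mu,\sigma^2)$. -/

import Mathlib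

open MeasureTheory ProbabilityTheory

/-- Standard normal density `φ`. -/
noncomputable def stdNormalPDF (z : ℝ) : ℝ :=
  Real.exp (-z ^ 2 / 2) / Real.sqrt (2 * Real.pi)

/-- Standard normal CDF `Φ`. -/
noncomputable def stdNormalCDF (z : ℝ) : ℝ :=
  ∫ t in Set.Iic z, stdNormalPDF t

open Filter Set Real
open scoped NNReal Topology ENNReal

namespace TruncGauss

variable (m : ℝ) (v : ℝ≥0)

/-- CDF of the general gaussian. -/
noncomputable def F (w : ℝ) : ℝ := ∫ x in Iic w, gaussianPDFReal m v x

lemma continuous_p : Continuous (gaussianPDFReal m v) := by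
  unfold gaussianPDFReal
  fun_prop

variable {v} (hv : v ≠ 0)
include hv

lemma vpos : 0 < (v : ℝ) := by
  simpa using (pos_iff_ne_zero.mpr hv : 0 < v)

lemma hasDerivAt_p (x : ℝ) :
    HasDerivAt (gaussianPDFReal m v) (-((x - m) / v) * gaussianPDFReal m v x) x := by
  have hvr : (0:ℝ) < v := vpos hv
  rw [gaussianPDFReal_def]
  have h1 : HasDerivAt (fun y : ℝ => -(y - m)^2 / (2 * (v:ℝ))) (-((x - m) / v)) x := by
    have h2 := (((hasDerivAt_id' x).sub_const m).pow 2).neg.div_const (2 * (v:ℝ))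
    refine h2.congr_deriv ?_
    field_simp
    ring
  have h3 := (h1.exp).const_mul ((Real.sqrt (2 * π * v))⁻¹)
  refine h3.congr_deriv ?_
  beta_reduce
  ring

lemma tendsto_sub_sq_div (l : Filter ℝ) (hl : Tendsto (fun x : ℝ => (x - m)^2) l atTop) :
    Tendsto (fun x : ℝ => -(x - m)^2 / (2 * (v:ℝ))) l atBot := by
  have hvr : (0:ℝ) < v := vpos hv
  have h2 := Tendsto.atBot_div_const (show (0:ℝ) < 2 * v by positivity)
    (tendsto_neg_atTop_atBot.comp hl)
  exact h2.congr (fun x => by simp [Function.comp, neg_div])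

lemma tendsto_p (l : Filter ℝ) (hl : Tendsto (fun x : ℝ => (x - m)^2) l atTop) :
    Tendsto (gaussianPDFReal m v) l (𝓝 0) := by
  have h2 := (Real.tendsto_exp_atBot.comp (tendsto_sub_sq_div m hv l hl)).const_mul
    ((Real.sqrt (2 * π * (v:ℝ)))⁻¹)
  rw [mul_zero] at h2
  refine h2.congr (fun x => ?_)
  simp [gaussianPDFReal, Function.comp, neg_div]

omit hv in
lemma tendsto_sq_bot : Tendsto (fun x : ℝ => (x - m)^2) atBot atTop := by
  have ha : Tendsto (fun x : ℝ => m - x) atBot atTop :=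
    (tendsto_atTop_add_const_left _ m tendsto_neg_atBot_atTop).congr
      (fun x => (sub_eq_add_neg m x).symm)
  exact ((tendsto_pow_atTop (two_ne_zero)).comp ha).congr (fun x => by simp only [Function.comp_apply]; ring)

omit hv in
lemma tendsto_sq_top : Tendsto (fun x : ℝ => (x - m)^2) atTop atTop := by
  have ha : Tendsto (fun x : ℝ => x - m) atTop atTop :=
    (tendsto_atTop_add_const_right _ (-m) tendsto_id).congr
      (fun x => (sub_eq_add_neg x m).symm)
  exact (tendsto_pow_atTop (two_ne_zero)).comp ha

lemma tendsto_p_bot : Tendsto (gaussianPDFReal m v) atBot (𝓝 0) :=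
  tendsto_p m hv _ (tendsto_sq_bot m)

lemma tendsto_p_top : Tendsto (gaussianPDFReal m v) atTop (𝓝 0) :=
  tendsto_p m hv _ (tendsto_sq_top m)


omit hv in
lemma tendsto_texp_top {b : ℝ} (hb : 0 < b) :
    Tendsto (fun t : ℝ => t * rexp (-b * t^2)) atTop (𝓝 0) := by
  have hlo := (rpow_mul_exp_neg_mul_sq_isLittleO_exp_neg hb 1).isBigO
  have hexp : Tendsto (fun x : ℝ => rexp (-(1/2) * x)) atTop (𝓝 0) := by
    apply Real.tendsto_exp_atBot.comp
    have := (tendsto_neg_atTop_atBot : Tendsto (fun x:ℝ => -x) atTop atBot).atBot_div_const (show (0:ℝ) < 2 by norm_num)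
    exact this.congr (fun x => by ring)
  have := hlo.trans_tendsto hexp
  exact this.congr (fun x => by rw [Real.rpow_one])

omit hv in
lemma tendsto_texp_bot {b : ℝ} (hb : 0 < b) :
    Tendsto (fun t : ℝ => t * rexp (-b * t^2)) atBot (𝓝 0) := by
  have h := ((tendsto_texp_top hb).comp tendsto_neg_atBot_atTop).neg
  rw [neg_zero] at h
  exact h.congr (fun x => by simp [Function.comp])

omit hv in
lemma xp_eq (x : ℝ) :
    (x - m) * gaussianPDFReal m v x
      = (Real.sqrt (2 * π * (v:ℝ)))⁻¹ * ((x - m) * rexp (-(2*(v:ℝ))⁻¹ * (x - m)^2)) := by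
  rw [gaussianPDFReal]
  rw [show -(2*(v:ℝ))⁻¹ * (x - m)^2 = -(x-m)^2/(2*(v:ℝ)) by ring]
  ring

omit hv in
lemma tendsto_xp (l : Filter ℝ)
    (hl : Tendsto (fun t : ℝ => t * rexp (-(2*(v:ℝ))⁻¹ * t^2)) l (𝓝 0))
    (hsub : Tendsto (fun x : ℝ => x - m) l l) :
    Tendsto (fun x : ℝ => (x - m) * gaussianPDFReal m v x) l (𝓝 0) := by
  have h := (hl.comp hsub).const_mul ((Real.sqrt (2 * π * (v:ℝ)))⁻¹)
  rw [mul_zero] at h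
  exact h.congr (fun x => by simp only [Function.comp_apply]; rw [xp_eq m x])

lemma invb_pos : 0 < (2*(v:ℝ))⁻¹ := by
  have := vpos hv; positivity

lemma tendsto_xp_top :
    Tendsto (fun x : ℝ => (x - m) * gaussianPDFReal m v x) atTop (𝓝 0) :=
  tendsto_xp m _ (tendsto_texp_top (invb_pos hv))
    (tendsto_atTop_add_const_right _ (-m) tendsto_id |>.congr
      (fun x => (sub_eq_add_neg x m).symm))

lemma tendsto_xp_bot :
    Tendsto (fun x : ℝ => (x - m) * gaussianPDFReal m v x) atBot (𝓝 0) :=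
  tendsto_xp m _ (tendsto_texp_bot (invb_pos hv))
    (tendsto_atBot_add_const_right _ (-m) tendsto_id |>.congr
      (fun x => (sub_eq_add_neg x m).symm))

lemma integrable_xp :
    Integrable (fun x : ℝ => (x - m) * gaussianPDFReal m v x) := by
  have hb := invb_pos hv (v := v)
  have base : Integrable (fun t : ℝ => t * rexp (-(2*(v:ℝ))⁻¹ * t^2)) := by
    have := integrable_rpow_mul_exp_neg_mul_sq hb (by norm_num : (-1:ℝ) < 1)
    exact this.congr (ae_of_all _ (fun x => by simp))
  have h2 := (base.comp_sub_right m).const_mul ((Real.sqrt (2 * π * (v:ℝ)))⁻¹)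
  exact h2.congr (ae_of_all _ (fun x => by beta_reduce; rw [xp_eq m x]))

omit hv in
lemma x2p_eq (x : ℝ) :
    (x - m)^2 * gaussianPDFReal m v x
      = (Real.sqrt (2 * π * (v:ℝ)))⁻¹ * ((x - m)^2 * rexp (-(2*(v:ℝ))⁻¹ * (x - m)^2)) := by
  rw [gaussianPDFReal]
  rw [show -(2*(v:ℝ))⁻¹ * (x - m)^2 = -(x-m)^2/(2*(v:ℝ)) by ring]
  ring

lemma integrable_x2p :
    Integrable (fun x : ℝ => (x - m)^2 * gaussianPDFReal m v x) := by
  have hb := invb_pos hv (v := v)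
  have base : Integrable (fun t : ℝ => t^2 * rexp (-(2*(v:ℝ))⁻¹ * t^2)) := by
    have := integrable_rpow_mul_exp_neg_mul_sq hb (by norm_num : (-1:ℝ) < ((2:ℕ):ℝ))
    exact this.congr (ae_of_all _ (fun x => by simp [Real.rpow_natCast]))
  have h2 := (base.comp_sub_right m).const_mul ((Real.sqrt (2 * π * (v:ℝ)))⁻¹)
  exact h2.congr (ae_of_all _ (fun x => by beta_reduce; rw [x2p_eq m x]))


lemma intIic_xp (w : ℝ) :
    ∫ x in Iic w, (x - m) * gaussianPDFReal m v x = -((v:ℝ) * gaussianPDFReal m v w) := by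
  have htends : Tendsto (fun x => -((v:ℝ) * gaussianPDFReal m v x)) atBot (𝓝 0) := by
    have := ((tendsto_p_bot m hv).const_mul (v:ℝ)).neg
    simpa using this
  have h := integral_Iic_of_hasDerivAt_of_tendsto
    (f := fun x => -((v:ℝ) * gaussianPDFReal m v x))
    (f' := fun x => (x - m) * gaussianPDFReal m v x) (a := w) (m := 0)
    ((continuous_const.mul (continuous_p m v)).neg.continuousWithinAt)
    (fun x _ => by
      have h2 := ((hasDerivAt_p m hv x).const_mul ((v:ℝ))).neg
      refine h2.congr_deriv ?_
      have := vpos hv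
      field_simp)
    ((integrable_xp m hv).integrableOn) htends
  rw [sub_zero] at h
  exact h

lemma intIoi_xp (w : ℝ) :
    ∫ x in Ioi w, (x - m) * gaussianPDFReal m v x = (v:ℝ) * gaussianPDFReal m v w := by
  have htends : Tendsto (fun x => -((v:ℝ) * gaussianPDFReal m v x)) atTop (𝓝 0) := by
    have := ((tendsto_p_top m hv).const_mul (v:ℝ)).neg
    simpa using this
  have h := integral_Ioi_of_hasDerivAt_of_tendsto
    (f := fun x => -((v:ℝ) * gaussianPDFReal m v x))
    (f' := fun x => (x - m) * gaussianPDFReal m v x) (a := w) (m := 0)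
    ((continuous_const.mul (continuous_p m v)).neg.continuousWithinAt)
    (fun x _ => by
      have h2 := ((hasDerivAt_p m hv x).const_mul ((v:ℝ))).neg
      refine h2.congr_deriv ?_
      have := vpos hv
      field_simp)
    ((integrable_xp m hv).integrableOn) htends
  rw [zero_sub, neg_neg] at h
  exact h

lemma integrable_oneSub :
    Integrable (fun x : ℝ => (1 - (x - m)^2 / v) * gaussianPDFReal m v x) := by
  have h := (integrable_gaussianPDFReal m v).sub ((integrable_x2p m hv).div_const (v:ℝ))
  exact h.congr (ae_of_all _ (fun x => by simp only [Pi.sub_apply]; ring))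

lemma hasDerivAt_xp (x : ℝ) :
    HasDerivAt (fun x => (x - m) * gaussianPDFReal m v x)
      ((1 - (x - m)^2 / v) * gaussianPDFReal m v x) x := by
  have h := ((hasDerivAt_id' x).sub_const m).mul (hasDerivAt_p m hv x)
  refine h.congr_deriv ?_
  have := vpos hv
  field_simp
  ring

lemma intIic_oneSub (w : ℝ) :
    ∫ x in Iic w, (1 - (x - m)^2 / v) * gaussianPDFReal m v x
      = (w - m) * gaussianPDFReal m v w := by
  have h := integral_Iic_of_hasDerivAt_of_tendsto
    (f := fun x => (x - m) * gaussianPDFReal m v x)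
    (f' := fun x => (1 - (x - m)^2 / v) * gaussianPDFReal m v x) (a := w) (m := 0)
    (((continuous_id.sub continuous_const).mul (continuous_p m v)).continuousWithinAt)
    (fun x _ => hasDerivAt_xp m hv x)
    ((integrable_oneSub m hv).integrableOn) (tendsto_xp_bot m hv)
  rw [sub_zero] at h
  exact h

lemma intIoi_oneSub (w : ℝ) :
    ∫ x in Ioi w, (1 - (x - m)^2 / v) * gaussianPDFReal m v x
      = -((w - m) * gaussianPDFReal m v w) := by
  have h := integral_Ioi_of_hasDerivAt_of_tendsto
    (f := fun x => (x - m) * gaussianPDFReal m v x)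
    (f' := fun x => (1 - (x - m)^2 / v) * gaussianPDFReal m v x) (a := w) (m := 0)
    (((continuous_id.sub continuous_const).mul (continuous_p m v)).continuousWithinAt)
    (fun x _ => hasDerivAt_xp m hv x)
    ((integrable_oneSub m hv).integrableOn) (tendsto_xp_top m hv)
  rw [zero_sub] at h
  exact h

lemma intIoi_p (w : ℝ) :
    ∫ x in Ioi w, gaussianPDFReal m v x = 1 - F m v w := by
  have h := intervalIntegral.integral_Iic_add_Ioi (b := w) (μ := volume)
    (integrable_gaussianPDFReal m v).integrableOn (integrable_gaussianPDFReal m v).integrableOn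
  rw [integral_gaussianPDFReal_eq_one m hv] at h
  rw [F] at *
  linarith

lemma intIic_x2p (w : ℝ) :
    ∫ x in Iic w, (x - m)^2 * gaussianPDFReal m v x
      = (v:ℝ) * F m v w - (v:ℝ) * ((w - m) * gaussianPDFReal m v w) := by
  have hv' : (v:ℝ) ≠ 0 := (vpos hv).ne'
  have hsplit : ∫ x in Iic w, (1 - (x - m)^2 / v) * gaussianPDFReal m v x
      = F m v w - (∫ x in Iic w, (x - m)^2 * gaussianPDFReal m v x) / v := by
    rw [F, ← integral_div]
    rw [← integral_sub ((integrable_gaussianPDFReal m v).integrableOn)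
      (((integrable_x2p m hv).div_const (v:ℝ)).integrableOn)]
    apply setIntegral_congr_fun measurableSet_Iic
    intro x _
    ring
  rw [intIic_oneSub m hv w] at hsplit
  have h2 : (∫ x in Iic w, (x - m)^2 * gaussianPDFReal m v x) / v
      = F m v w - (w - m) * gaussianPDFReal m v w := by linarith
  field_simp at h2
  linarith

lemma intIoi_x2p (w : ℝ) :
    ∫ x in Ioi w, (x - m)^2 * gaussianPDFReal m v x
      = (v:ℝ) * (1 - F m v w) + (v:ℝ) * ((w - m) * gaussianPDFReal m v w) := by
  have hv' : (v:ℝ) ≠ 0 := (vpos hv).ne'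
  have hsplit : ∫ x in Ioi w, (1 - (x - m)^2 / v) * gaussianPDFReal m v x
      = (1 - F m v w) - (∫ x in Ioi w, (x - m)^2 * gaussianPDFReal m v x) / v := by
    rw [← intIoi_p m hv w, ← integral_div]
    rw [← integral_sub ((integrable_gaussianPDFReal m v).integrableOn)
      (((integrable_x2p m hv).div_const (v:ℝ)).integrableOn)]
    apply setIntegral_congr_fun measurableSet_Ioi
    intro x _
    ring
  rw [intIoi_oneSub m hv w] at hsplit
  have h2 : (∫ x in Ioi w, (x - m)^2 * gaussianPDFReal m v x) / v
      = (1 - F m v w) + (w - m) * gaussianPDFReal m v w := by linarith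
  field_simp at h2
  linarith

lemma F_pos (w : ℝ) : 0 < F m v w := by
  rw [F, setIntegral_pos_iff_support_of_nonneg_ae
    (ae_of_all _ (gaussianPDFReal_nonneg m v))
    ((integrable_gaussianPDFReal m v).integrableOn)]
  have hsupp : Function.support (gaussianPDFReal m v) = univ :=
    Set.eq_univ_of_forall fun x => (gaussianPDFReal_pos m v x hv).ne'
  rw [hsupp]
  simp [Real.volume_Iic]

lemma F_lt_one (w : ℝ) : 0 < 1 - F m v w := by
  rw [← intIoi_p m hv w, setIntegral_pos_iff_support_of_nonneg_ae
    (ae_of_all _ (gaussianPDFReal_nonneg m v))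
    ((integrable_gaussianPDFReal m v).integrableOn)]
  have hsupp : Function.support (gaussianPDFReal m v) = univ :=
    Set.eq_univ_of_forall fun x => (gaussianPDFReal_pos m v x hv).ne'
  rw [hsupp]
  simp [Real.volume_Ioi]

lemma mills_Iic (w : ℝ) :
    0 ≤ (w - m) * F m v w + (v:ℝ) * gaussianPDFReal m v w := by
  rcases le_or_gt m w with h | h
  · exact add_nonneg (mul_nonneg (sub_nonneg.2 h) (F_pos m hv w).le)
      (mul_nonneg (vpos hv).le (gaussianPDFReal_nonneg m v w))
  · have ht : w - m < 0 := sub_neg.2 h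
    have hle : F m v w ≤ (w - m)⁻¹ * (-((v:ℝ) * gaussianPDFReal m v w)) := by
      rw [← intIic_xp m hv w, ← integral_const_mul, F]
      apply setIntegral_mono_on ((integrable_gaussianPDFReal m v).integrableOn)
        (((integrable_xp m hv).const_mul _).integrableOn) measurableSet_Iic
      intro x hx
      have hc : 1 ≤ (x - m) / (w - m) := by
        rw [le_div_iff_of_neg ht, one_mul]
        exact sub_le_sub_right hx m
      calc gaussianPDFReal m v x = 1 * gaussianPDFReal m v x := (one_mul _).symm
        _ ≤ ((x - m) / (w - m)) * gaussianPDFReal m v x :=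
            mul_le_mul_of_nonneg_right hc (gaussianPDFReal_nonneg m v x)
        _ = (w - m)⁻¹ * ((x - m) * gaussianPDFReal m v x) := by ring
    have h2 := mul_le_mul_of_nonpos_left hle ht.le
    rw [← mul_assoc, mul_inv_cancel₀ ht.ne, one_mul] at h2
    linarith

lemma mills_Ioi (w : ℝ) :
    0 ≤ (v:ℝ) * gaussianPDFReal m v w - (w - m) * (1 - F m v w) := by
  rcases le_or_gt w m with h | h
  · have h1 := F_lt_one m hv w
    have h2 := mul_nonneg (sub_nonneg.2 h) h1.le
    have h3 := mul_nonneg (vpos hv).le (gaussianPDFReal_nonneg m v w)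
    nlinarith
  · have ht : 0 < w - m := sub_pos.2 h
    have hle : 1 - F m v w ≤ (w - m)⁻¹ * ((v:ℝ) * gaussianPDFReal m v w) := by
      rw [← intIoi_xp m hv w, ← integral_const_mul, ← intIoi_p m hv w]
      apply setIntegral_mono_on ((integrable_gaussianPDFReal m v).integrableOn)
        (((integrable_xp m hv).const_mul _).integrableOn) measurableSet_Ioi
      intro x hx
      have hc : 1 ≤ (x - m) / (w - m) := by
        rw [le_div_iff₀ ht, one_mul]
        exact sub_le_sub_right (le_of_lt hx) m
      calc gaussianPDFReal m v x = 1 * gaussianPDFReal m v x := (one_mul _).symm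
        _ ≤ ((x - m) / (w - m)) * gaussianPDFReal m v x :=
            mul_le_mul_of_nonneg_right hc (gaussianPDFReal_nonneg m v x)
        _ = (w - m)⁻¹ * ((x - m) * gaussianPDFReal m v x) := by ring
    have h2 := mul_le_mul_of_nonneg_left hle ht.le
    rw [← mul_assoc, mul_inv_cancel₀ ht.ne', one_mul] at h2
    linarith


lemma integrable_xmul : Integrable (fun x : ℝ => x * gaussianPDFReal m v x) := by
  have h := (integrable_xp m hv).add ((integrable_gaussianPDFReal m v).const_mul m)
  exact h.congr (ae_of_all _ fun x => by simp only [Pi.add_apply]; ring)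

lemma integrable_sqmul : Integrable (fun x : ℝ => x^2 * gaussianPDFReal m v x) := by
  have h := ((integrable_x2p m hv).add ((integrable_xmul m hv).const_mul (2*m))).sub
    ((integrable_gaussianPDFReal m v).const_mul (m^2))
  exact h.congr (ae_of_all _ fun x => by simp only [Pi.add_apply, Pi.sub_apply]; ring)

lemma intIic_xmul (w : ℝ) :
    ∫ x in Iic w, x * gaussianPDFReal m v x
      = m * F m v w - (v:ℝ) * gaussianPDFReal m v w := by
  calc ∫ x in Iic w, x * gaussianPDFReal m v x
      = ∫ x in Iic w, ((x - m) * gaussianPDFReal m v x + m * gaussianPDFReal m v x) :=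
        setIntegral_congr_fun measurableSet_Iic (fun x _ => by ring)
    _ = (∫ x in Iic w, (x - m) * gaussianPDFReal m v x)
        + ∫ x in Iic w, m * gaussianPDFReal m v x :=
        integral_add ((integrable_xp m hv).integrableOn)
          (((integrable_gaussianPDFReal m v).const_mul m).integrableOn)
    _ = m * F m v w - (v:ℝ) * gaussianPDFReal m v w := by
        rw [intIic_xp m hv w, integral_const_mul, ← F]; ring

lemma intIoi_xmul (w : ℝ) :
    ∫ x in Ioi w, x * gaussianPDFReal m v x
      = m * (1 - F m v w) + (v:ℝ) * gaussianPDFReal m v w := by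
  calc ∫ x in Ioi w, x * gaussianPDFReal m v x
      = ∫ x in Ioi w, ((x - m) * gaussianPDFReal m v x + m * gaussianPDFReal m v x) :=
        setIntegral_congr_fun measurableSet_Ioi (fun x _ => by ring)
    _ = (∫ x in Ioi w, (x - m) * gaussianPDFReal m v x)
        + ∫ x in Ioi w, m * gaussianPDFReal m v x :=
        integral_add ((integrable_xp m hv).integrableOn)
          (((integrable_gaussianPDFReal m v).const_mul m).integrableOn)
    _ = m * (1 - F m v w) + (v:ℝ) * gaussianPDFReal m v w := by
        rw [intIoi_xp m hv w, integral_const_mul, intIoi_p m hv w]; ring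

lemma intIic_sqmul (w : ℝ) :
    ∫ x in Iic w, x^2 * gaussianPDFReal m v x
      = ((v:ℝ) + m^2) * F m v w - (v:ℝ) * ((w - m) * gaussianPDFReal m v w)
        - 2*m*((v:ℝ) * gaussianPDFReal m v w) := by
  calc ∫ x in Iic w, x^2 * gaussianPDFReal m v x
      = ∫ x in Iic w, ((x - m)^2 * gaussianPDFReal m v x
          + (2*m) * (x * gaussianPDFReal m v x) - m^2 * gaussianPDFReal m v x) :=
        setIntegral_congr_fun measurableSet_Iic (fun x _ => by ring)
    _ = ((∫ x in Iic w, (x - m)^2 * gaussianPDFReal m v x)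
          + ∫ x in Iic w, (2*m) * (x * gaussianPDFReal m v x))
        - ∫ x in Iic w, m^2 * gaussianPDFReal m v x := by
        have hA : Integrable (fun x : ℝ => (x - m)^2 * gaussianPDFReal m v x
            + (2*m) * (x * gaussianPDFReal m v x)) :=
          ((integrable_x2p m hv).add ((integrable_xmul m hv).const_mul (2*m))).congr
            (ae_of_all _ fun x => by simp [Pi.add_apply])
        rw [integral_sub (hA.integrableOn)
          (((integrable_gaussianPDFReal m v).const_mul (m^2)).integrableOn),
          integral_add ((integrable_x2p m hv).integrableOn)
            (((integrable_xmul m hv).const_mul (2*m)).integrableOn)]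
    _ = ((v:ℝ) + m^2) * F m v w - (v:ℝ) * ((w - m) * gaussianPDFReal m v w)
        - 2*m*((v:ℝ) * gaussianPDFReal m v w) := by
        rw [intIic_x2p m hv w, integral_const_mul, integral_const_mul, intIic_xmul m hv w, ← F]
        ring

lemma intIoi_sqmul (w : ℝ) :
    ∫ x in Ioi w, x^2 * gaussianPDFReal m v x
      = ((v:ℝ) + m^2) * (1 - F m v w) + (v:ℝ) * ((w - m) * gaussianPDFReal m v w)
        + 2*m*((v:ℝ) * gaussianPDFReal m v w) := by
  calc ∫ x in Ioi w, x^2 * gaussianPDFReal m v x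
      = ∫ x in Ioi w, ((x - m)^2 * gaussianPDFReal m v x
          + (2*m) * (x * gaussianPDFReal m v x) - m^2 * gaussianPDFReal m v x) :=
        setIntegral_congr_fun measurableSet_Ioi (fun x _ => by ring)
    _ = ((∫ x in Ioi w, (x - m)^2 * gaussianPDFReal m v x)
          + ∫ x in Ioi w, (2*m) * (x * gaussianPDFReal m v x))
        - ∫ x in Ioi w, m^2 * gaussianPDFReal m v x := by
        have hA : Integrable (fun x : ℝ => (x - m)^2 * gaussianPDFReal m v x
            + (2*m) * (x * gaussianPDFReal m v x)) :=
          ((integrable_x2p m hv).add ((integrable_xmul m hv).const_mul (2*m))).congr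
            (ae_of_all _ fun x => by simp [Pi.add_apply])
        rw [integral_sub (hA.integrableOn)
          (((integrable_gaussianPDFReal m v).const_mul (m^2)).integrableOn),
          integral_add ((integrable_x2p m hv).integrableOn)
            (((integrable_xmul m hv).const_mul (2*m)).integrableOn)]
    _ = ((v:ℝ) + m^2) * (1 - F m v w) + (v:ℝ) * ((w - m) * gaussianPDFReal m v w)
        + 2*m*((v:ℝ) * gaussianPDFReal m v w) := by
        rw [intIoi_x2p m hv w, integral_const_mul, integral_const_mul, intIoi_xmul m hv w,
          intIoi_p m hv w]
        ring

lemma gaussian_Iic (w : ℝ) :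
    gaussianReal m v (Iic w) = ENNReal.ofReal (F m v w) := by
  rw [gaussianReal_apply_eq_integral m hv, F]

lemma gaussian_Ici (w : ℝ) :
    gaussianReal m v (Ici w) = ENNReal.ofReal (1 - F m v w) := by
  rw [gaussianReal_apply_eq_integral m hv, ← intIoi_p m hv w, integral_Ici_eq_integral_Ioi]

lemma integral_cond {s : Set ℝ} (hs : MeasurableSet s) (g : ℝ → ℝ) :
    ∫ x, g x ∂((gaussianReal m v)[|s])
      = ((gaussianReal m v s).toReal)⁻¹ * ∫ x in s, g x * gaussianPDFReal m v x := by
  rw [ProbabilityTheory.cond, integral_smul_measure, ENNReal.toReal_inv]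
  congr 1
  rw [gaussianReal_of_var_ne_zero m hv, gaussianPDF_def, restrict_withDensity hs]
  have hmeq : (fun x => ENNReal.ofReal (gaussianPDFReal m v x))
      = (fun x => ((Real.toNNReal (gaussianPDFReal m v x)) : ℝ≥0∞)) := rfl
  rw [hmeq, integral_withDensity_eq_integral_smul
    ((measurable_gaussianPDFReal m v).real_toNNReal) g]
  refine integral_congr_ae (ae_of_all _ fun x => ?_)
  simp only [NNReal.smul_def, Real.coe_toNNReal _ (gaussianPDFReal_nonneg m v x),
    smul_eq_mul]
  ring

lemma memLp_cond {s : Set ℝ} (hns : gaussianReal m v s ≠ 0) :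
    MemLp id 2 ((gaussianReal m v)[|s]) := by
  have h1 : MemLp (id : ℝ → ℝ) 2 (gaussianReal m v) := by
    rw [memLp_two_iff_integrable_sq aestronglyMeasurable_id,
      gaussianReal_of_var_ne_zero m hv,
      integrable_withDensity_iff (measurable_gaussianPDF m v)
        (ae_of_all _ fun x => ENNReal.ofReal_lt_top)]
    refine (integrable_sqmul m hv).congr (ae_of_all _ fun x => ?_)
    simp [gaussianPDF, ENNReal.toReal_ofReal (gaussianPDFReal_nonneg m v x)]
  rw [ProbabilityTheory.cond]
  exact (h1.restrict s).smul_measure (ENNReal.inv_ne_top.2 hns)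

lemma variance_cond_Iic (w : ℝ) :
    variance id ((gaussianReal m v)[|Iic w]) ≤ (v:ℝ) := by
  have hF := F_pos m hv w
  have hp := gaussianPDFReal_nonneg m v w
  have hvp := vpos hv (v := v)
  have hγ : gaussianReal m v (Iic w) = ENNReal.ofReal (F m v w) := gaussian_Iic m hv w
  have hns : gaussianReal m v (Iic w) ≠ 0 := by
    rw [hγ]; exact (ENNReal.ofReal_pos.2 hF).ne'
  haveI := cond_isProbabilityMeasure (μ := gaussianReal m v) hns
  rw [variance_eq_sub (memLp_cond m hv hns)]
  have hid2 : (id ^ 2 : ℝ → ℝ) = fun x => x^2 := rfl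
  have hid : (id : ℝ → ℝ) = fun x => x := rfl
  rw [hid2, hid, integral_cond m hv measurableSet_Iic, integral_cond m hv measurableSet_Iic,
    hγ, ENNReal.toReal_ofReal hF.le]
  have e1 : ∫ x in Iic w, (fun x : ℝ => x^2) x * gaussianPDFReal m v x
      = ((v:ℝ) + m^2) * F m v w - (v:ℝ) * ((w - m) * gaussianPDFReal m v w)
        - 2*m*((v:ℝ) * gaussianPDFReal m v w) := intIic_sqmul m hv w
  have e2 : ∫ x in Iic w, (fun x : ℝ => x) x * gaussianPDFReal m v x
      = m * F m v w - (v:ℝ) * gaussianPDFReal m v w := intIic_xmul m hv w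
  rw [e1, e2]
  set Fw := F m v w
  set P := gaussianPDFReal m v w
  have key := mills_Iic m hv w
  have hF2 : (0:ℝ) < Fw^2 := by positivity
  have hkey2 : 0 ≤ (v:ℝ) * P * ((w - m) * Fw + (v:ℝ) * P) :=
    mul_nonneg (mul_nonneg hvp.le hp) key
  have heq : Fw⁻¹ * (((v:ℝ) + m^2) * Fw - (v:ℝ) * ((w - m) * P) - 2*m*((v:ℝ) * P))
      - (Fw⁻¹ * (m * Fw - (v:ℝ) * P))^2
      = (Fw * (((v:ℝ) + m^2) * Fw - (v:ℝ) * ((w - m) * P) - 2*m*((v:ℝ) * P))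
          - (m * Fw - (v:ℝ) * P)^2) / Fw^2 := by
    field_simp
  rw [heq, div_le_iff₀ hF2]
  nlinarith [hkey2]

lemma variance_cond_Ici (w : ℝ) :
    variance id ((gaussianReal m v)[|Ici w]) ≤ (v:ℝ) := by
  have hF := F_lt_one m hv w
  have hp := gaussianPDFReal_nonneg m v w
  have hvp := vpos hv (v := v)
  have hγ : gaussianReal m v (Ici w) = ENNReal.ofReal (1 - F m v w) := gaussian_Ici m hv w
  have hns : gaussianReal m v (Ici w) ≠ 0 := by
    rw [hγ]; exact (ENNReal.ofReal_pos.2 hF).ne'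
  haveI := cond_isProbabilityMeasure (μ := gaussianReal m v) hns
  rw [variance_eq_sub (memLp_cond m hv hns)]
  have hid2 : (id ^ 2 : ℝ → ℝ) = fun x => x^2 := rfl
  have hid : (id : ℝ → ℝ) = fun x => x := rfl
  rw [hid2, hid, integral_cond m hv measurableSet_Ici, integral_cond m hv measurableSet_Ici,
    hγ, ENNReal.toReal_ofReal hF.le]
  have e1 : ∫ x in Ici w, (fun x : ℝ => x^2) x * gaussianPDFReal m v x
      = ((v:ℝ) + m^2) * (1 - F m v w) + (v:ℝ) * ((w - m) * gaussianPDFReal m v w)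
        + 2*m*((v:ℝ) * gaussianPDFReal m v w) := by
    rw [integral_Ici_eq_integral_Ioi]; exact intIoi_sqmul m hv w
  have e2 : ∫ x in Ici w, (fun x : ℝ => x) x * gaussianPDFReal m v x
      = m * (1 - F m v w) + (v:ℝ) * gaussianPDFReal m v w := by
    rw [integral_Ici_eq_integral_Ioi]; exact intIoi_xmul m hv w
  rw [e1, e2]
  set G := 1 - F m v w with hG
  set P := gaussianPDFReal m v w
  have key := mills_Ioi m hv w
  rw [← hG] at key
  have hF2 : (0:ℝ) < G^2 := by positivity
  have hkey2 : 0 ≤ (v:ℝ) * P * ((v:ℝ) * P - (w - m) * G) :=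
    mul_nonneg (mul_nonneg hvp.le hp) key
  have heq : G⁻¹ * (((v:ℝ) + m^2) * G + (v:ℝ) * ((w - m) * P) + 2*m*((v:ℝ) * P))
      - (G⁻¹ * (m * G + (v:ℝ) * P))^2
      = (G * (((v:ℝ) + m^2) * G + (v:ℝ) * ((w - m) * P) + 2*m*((v:ℝ) * P))
          - (m * G + (v:ℝ) * P)^2) / G^2 := by
    field_simp
  rw [heq, div_le_iff₀ hF2]
  nlinarith [hkey2]

end TruncGauss


lemma stdNormalPDF_eq : stdNormalPDF = gaussianPDFReal 0 (1 : ℝ≥0) := by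
  funext z
  simp only [stdNormalPDF, gaussianPDFReal, NNReal.coe_one, mul_one, sub_zero]
  rw [div_eq_inv_mul]

lemma stdNormalCDF_eq (z : ℝ) : stdNormalCDF z = TruncGauss.F 0 (1 : ℝ≥0) z := by
  rw [stdNormalCDF, TruncGauss.F, stdNormalPDF_eq]

lemma stdNormalPDF_nonneg (z : ℝ) : 0 ≤ stdNormalPDF z := by
  rw [stdNormalPDF_eq]; exact gaussianPDFReal_nonneg 0 1 z

/-- Both truncated variances are bounded by the untruncated
variance: for every real `ζ`,
`1 - ζφ(ζ)/Φ(ζ) - (φ(ζ)/Φ(ζ))² ≤ 1` and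
`1 + ζφ(ζ)/(1-Φ(ζ)) - (φ(ζ)/(1-Φ(ζ)))² ≤ 1`;
equivalently, `Var(X | X ≤ v) ≤ σ²` and `Var(X | X ≥ v) ≤ σ²` for
`X ~ N(μ, σ²)`. -/
theorem truncated_gaussian_variance_le :
    (∀ ζ : ℝ,
      1 - ζ * stdNormalPDF ζ / stdNormalCDF ζ
          - (stdNormalPDF ζ / stdNormalCDF ζ) ^ 2 ≤ 1 ∧
      1 + ζ * stdNormalPDF ζ / (1 - stdNormalCDF ζ)
          - (stdNormalPDF ζ / (1 - stdNormalCDF ζ)) ^ 2 ≤ 1) ∧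
    (∀ μ σ v : ℝ, 0 < σ →
      variance id ((gaussianReal μ (⟨σ ^ 2, sq_nonneg σ⟩ : NNReal))[|Set.Iic v])
          ≤ σ ^ 2 ∧
      variance id ((gaussianReal μ (⟨σ ^ 2, sq_nonneg σ⟩ : NNReal))[|Set.Ici v])
          ≤ σ ^ 2) := by
  have h1 : (1 : ℝ≥0) ≠ 0 := one_ne_zero
  constructor
  · intro ζ
    have hΦ : 0 < stdNormalCDF ζ := by rw [stdNormalCDF_eq]; exact TruncGauss.F_pos 0 h1 ζ
    have hG : 0 < 1 - stdNormalCDF ζ := by rw [stdNormalCDF_eq]; exact TruncGauss.F_lt_one 0 h1 ζ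
    have hφ : 0 ≤ stdNormalPDF ζ := stdNormalPDF_nonneg ζ
    have key1 : 0 ≤ ζ * stdNormalCDF ζ + stdNormalPDF ζ := by
      have := TruncGauss.mills_Iic 0 h1 ζ
      rw [← stdNormalCDF_eq, ← stdNormalPDF_eq] at this
      simpa using this
    have key2 : 0 ≤ stdNormalPDF ζ - ζ * (1 - stdNormalCDF ζ) := by
      have := TruncGauss.mills_Ioi 0 h1 ζ
      rw [← stdNormalCDF_eq, ← stdNormalPDF_eq] at this
      simpa using this
    constructor
    · have heq : ζ * stdNormalPDF ζ / stdNormalCDF ζ + (stdNormalPDF ζ / stdNormalCDF ζ)^2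
          = ((ζ * stdNormalCDF ζ + stdNormalPDF ζ) * stdNormalPDF ζ) / (stdNormalCDF ζ)^2 := by
        field_simp
      have hnn : 0 ≤ ζ * stdNormalPDF ζ / stdNormalCDF ζ + (stdNormalPDF ζ / stdNormalCDF ζ)^2 := by
        rw [heq]
        exact div_nonneg (mul_nonneg key1 hφ) (sq_nonneg _)
      linarith
    · have heq : (stdNormalPDF ζ / (1 - stdNormalCDF ζ))^2
            - ζ * stdNormalPDF ζ / (1 - stdNormalCDF ζ)
          = ((stdNormalPDF ζ - ζ * (1 - stdNormalCDF ζ)) * stdNormalPDF ζ)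
              / (1 - stdNormalCDF ζ)^2 := by
        field_simp
      have hnn : 0 ≤ (stdNormalPDF ζ / (1 - stdNormalCDF ζ))^2
          - ζ * stdNormalPDF ζ / (1 - stdNormalCDF ζ) := by
        rw [heq]
        exact div_nonneg (mul_nonneg key2 hφ) (sq_nonneg _)
      linarith
  · intro μ σ v hσ
    have hv : (⟨σ ^ 2, sq_nonneg σ⟩ : ℝ≥0) ≠ 0 :=
      NNReal.coe_ne_zero.mp (by exact (pow_pos hσ 2).ne')
    exact ⟨TruncGauss.variance_cond_Iic μ hv v, TruncGauss.variance_cond_Ici μ hv v⟩
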